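/- Let L be an irreducible module over 𝔰𝔩_n(ℂ) (not necessarily a weight module). Then for any i ≠ j with 1 ≤ i, j ≤ n, the action of the matrix unit E_{ij} on L is either injective or locally nilpotent (every vector is annihilated by some power of E_{ij}). -/

import Mathlib

open LieAlgebra.SpecialLinear

section Aux

variable {n : ℕ} (i j : Fin n) (hij : j ≠ i)

lemma Eb_sq_zero : (single i j hij.symm (1 : ℂ)).val * (single i j hij.symm (1 : ℂ)).val = 0 :=
  by rw [val_single]; simp [Matrix.single_mul_single_of_ne, hij]

lemma ad_cube_zero (y : sl (Fin n) ℂ) :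
    ⁅single i j hij.symm (1 : ℂ), ⁅single i j hij.symm (1 : ℂ), ⁅single i j hij.symm (1 : ℂ), y⁆⁆⁆ = 0 := by
  have h := Eb_sq_zero i j hij
  apply Subtype.ext
  show ((⁅single i j hij.symm (1 : ℂ), ⁅single i j hij.symm (1 : ℂ), ⁅single i j hij.symm (1 : ℂ), y⁆⁆⁆ : sl (Fin n) ℂ) :
    Matrix (Fin n) (Fin n) ℂ) = 0
  push_cast [Ring.lie_def]
  set X := (single i j hij.symm (1 : ℂ)).val
  set Y := (y : Matrix (Fin n) (Fin n) ℂ)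
  noncomm_ring
  have t1 : X*(X*(X*Y)) = 0 := by rw [← mul_assoc, h, zero_mul]
  have t2 : X*(X*(Y*X)) = 0 := by rw [← mul_assoc, h, zero_mul]
  have t3 : X*(Y*(X*X)) = 0 := by rw [h, mul_zero, mul_zero]
  have t4 : Y*(X*(X*X)) = 0 := by rw [h, mul_zero, mul_zero]
  rw [t1, t2, t3, t4]
  simp

end Aux

/-- Key binomial identity: in a noncommutative algebra,
`a^k * b = ∑ C(k,m) • (ad a)^m b * a^(k-m)`. -/
lemma pow_mul_expand {A : Type*} [Ring A] [Algebra ℂ A] (a b : A) (k : ℕ) :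
    a ^ k * b = ∑ m ∈ Finset.range (k + 1),
      (k.choose m) • (((LinearMap.mulLeft ℂ a - LinearMap.mulRight ℂ a) ^ m) b * a ^ (k - m)) := by
  set D := LinearMap.mulLeft ℂ a - LinearMap.mulRight ℂ a with hD
  have hcomm : Commute D (LinearMap.mulRight ℂ a) :=
    Commute.sub_left (LinearMap.commute_mulLeft_right a a) (Commute.refl _)
  have hL : LinearMap.mulLeft ℂ a = D + LinearMap.mulRight ℂ a := by rw [hD]; abel
  calc a ^ k * b = (LinearMap.mulLeft ℂ a ^ k) b := by
        rw [LinearMap.pow_mulLeft, LinearMap.mulLeft_apply]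
    _ = ((D + LinearMap.mulRight ℂ a) ^ k) b := by rw [hL]
    _ = (∑ m ∈ Finset.range (k + 1),
          D ^ m * LinearMap.mulRight ℂ a ^ (k - m) * (k.choose m : Module.End ℂ A)) b := by
        rw [hcomm.add_pow]
    _ = _ := by
        rw [LinearMap.sum_apply]
        refine Finset.sum_congr rfl fun m _ => ?_
        rw [(hcomm.pow_pow m (k - m)).eq, Module.End.mul_apply, Module.End.mul_apply, Module.End.natCast_apply, map_nsmul, map_nsmul,
          LinearMap.pow_mulRight, LinearMap.mulRight_apply]

theorem sl_matrix_unit_injective_or_locallyNilpotent (n : ℕ)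
    (L : Type*) [AddCommGroup L] [Module ℂ L]
    [LieRingModule (sl (Fin n) ℂ) L] [LieModule ℂ (sl (Fin n) ℂ) L]
    [LieModule.IsIrreducible ℂ (sl (Fin n) ℂ) L]
    (i j : Fin n) (hij : j ≠ i) :
    Function.Injective (fun v : L => ⁅single i j hij.symm (1 : ℂ), v⁆) ∨
      ∀ v : L, ∃ k : ℕ,
        ((LieModule.toEnd ℂ (sl (Fin n) ℂ) L (single i j hij.symm (1 : ℂ))) ^ k) v = 0 := by
  set E := single i j hij.symm (1 : ℂ) with hE
  set a := LieModule.toEnd ℂ (sl (Fin n) ℂ) L E with ha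
  set D := LinearMap.mulLeft ℂ a - LinearMap.mulRight ℂ a with hD
  -- D^m applied to toEnd x is toEnd of the m-fold bracket, which vanishes for m ≥ 3
  have hDad : ∀ (m : ℕ) (x : sl (Fin n) ℂ),
      (D ^ m) (LieModule.toEnd ℂ (sl (Fin n) ℂ) L x) =
        LieModule.toEnd ℂ (sl (Fin n) ℂ) L (((LieAlgebra.ad ℂ (sl (Fin n) ℂ) E) ^ m) x) := by
    intro m
    induction m with
    | zero => intro x; simp
    | succ m ih =>
      intro x
      have hstep : ∀ y : sl (Fin n) ℂ, D (LieModule.toEnd ℂ (sl (Fin n) ℂ) L y) =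
          LieModule.toEnd ℂ (sl (Fin n) ℂ) L ⁅E, y⁆ := by
        intro y
        rw [hD, ha]; ext v; rw [LieModule.toEnd_apply_apply, lie_lie]
        simp [Ring.lie_def]
      rw [pow_succ', pow_succ', Module.End.mul_apply, Module.End.mul_apply, ih x, hstep,
        LieAlgebra.ad_apply]
  have had3 : ∀ (m : ℕ) (x : sl (Fin n) ℂ), 3 ≤ m →
      ((LieAlgebra.ad ℂ (sl (Fin n) ℂ) E) ^ m) x = 0 := by
    intro m x hm
    obtain ⟨p, rfl⟩ := Nat.exists_eq_add_of_le hm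
    rw [add_comm, pow_add, Module.End.mul_apply]
    have : ((LieAlgebra.ad ℂ (sl (Fin n) ℂ) E) ^ 3) x = 0 := by
      show ⁅E, ⁅E, ⁅E, x⁆⁆⁆ = 0
      exact ad_cube_zero i j hij x
    rw [this, map_zero]
  -- the set of locally nilpotent vectors is a Lie submodule
  set N : LieSubmodule ℂ (sl (Fin n) ℂ) L :=
    { carrier := {v | ∃ k : ℕ, (a ^ k) v = 0}
      add_mem' := by
        rintro v w ⟨k, hk⟩ ⟨l, hl⟩
        have h1 : (a ^ (k + l)) v = 0 := by
          rw [add_comm, pow_add, Module.End.mul_apply, hk, map_zero]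
        have h2 : (a ^ (k + l)) w = 0 := by
          rw [pow_add, Module.End.mul_apply, hl, map_zero]
        exact ⟨k + l, by rw [map_add, h1, h2, add_zero]⟩
      zero_mem' := ⟨0, by simp⟩
      smul_mem' := by
        rintro c v ⟨k, hk⟩
        exact ⟨k, by rw [map_smul, hk, smul_zero]⟩
      lie_mem := by
        rintro x v ⟨k₀, hk⟩
        refine ⟨k₀ + 3, ?_⟩
        have hx : ⁅x, v⁆ = LieModule.toEnd ℂ (sl (Fin n) ℂ) L x v := rfl
        rw [hx, ← Module.End.mul_apply, pow_mul_expand, LinearMap.sum_apply]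
        refine Finset.sum_eq_zero fun m hm => ?_
        rw [LinearMap.smul_apply, Module.End.mul_apply]
        rcases le_or_gt 3 m with h3 | h3
        · rw [← hD, hDad m x, had3 m x h3, map_zero, LinearMap.zero_apply, smul_zero]
        · obtain ⟨p, hp⟩ : ∃ p, k₀ + 3 - m = p + k₀ := ⟨3 - m, by omega⟩
          rw [hp, pow_add, Module.End.mul_apply, hk, map_zero, map_zero, smul_zero] }
    with hN
  rcases eq_bot_or_eq_top N with hbot | htop
  · left
    intro v w hvw
    have h1 : a (v - w) = 0 := by
      simp only at hvw
      rw [map_sub]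
      have : a v = a w := hvw
      rw [this, sub_self]
    have hmem : v - w ∈ N := ⟨1, by rwa [pow_one]⟩
    rw [hbot, LieSubmodule.mem_bot] at hmem
    exact sub_eq_zero.mp hmem
  · right
    intro v
    have hmem : v ∈ N := htop ▸ LieSubmodule.mem_top v
    exact hmem
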